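/- Let a' ∈ ℝ³ be spacelike and n ∈ ℝ³ be timelike with ⟨n,n⟩_L = −1 and ⟨n, a'⟩_L = 0. If N = m·(Re(v') ×_E a') is the unit timelike Euclidean normal (⟨N,N⟩_L = −1) to the plane spanned by Re(v') and a', and n₁ = (N₁, N₂, −N₃), then (n₁ ×_L a') ×_E a' = ⟨a', a'⟩_L · N. -/
import Mathlib


/-- Lorentzian inner product on ℝ³. -/
def LR (v w : Fin 3 → ℝ) : ℝ := v 0 * w 0 + v 1 * w 1 - v 2 * w 2

/-- Lorentzian cross product on ℝ³. -/
def lcross (v w : Fin 3 → ℝ) : Fin 3 → ℝ :=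
  ![v 1 * w 2 - v 2 * w 1, v 2 * w 0 - v 0 * w 2, -(v 0 * w 1 - v 1 * w 0)]

/-- Euclidean cross product on ℝ³. -/
def ecross (v w : Fin 3 → ℝ) : Fin 3 → ℝ :=
  ![v 1 * w 2 - v 2 * w 1, v 2 * w 0 - v 0 * w 2, v 0 * w 1 - v 1 * w 0]

/-- If N = m·(Re(v') ×_E a') is the unit timelike Euclidean normal to the plane of
Re(v') and a', and n₁ = (N₁, N₂, −N₃), then (n₁ ×_L a') ×_E a' = ⟨a',a'⟩_L · N. -/
theorem stmt_4 (a' n Rev' N n₁ : Fin 3 → ℝ) (m : ℝ)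
    (hspace : 0 < LR a' a')
    (hn : LR n n = -1) (hna : LR n a' = 0)
    (hN : N = m • ecross Rev' a')
    (hNunit : LR N N = -1)
    (hn₁ : n₁ = ![N 0, N 1, -(N 2)]) :
    ecross (lcross n₁ a') a' = LR a' a' • N := by
  have horth : N 0 * a' 0 + N 1 * a' 1 + N 2 * a' 2 = 0 := by
    subst hN; simp [ecross]; ring
  subst hn₁
  funext i
  fin_cases i <;> simp [ecross, lcross, LR]
  · linear_combination (-a' 0) * horth
  · linear_combination (-a' 1) * horth
  · linear_combination (a' 2) * horth
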